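/- Let Γ be a simplicial complex on a finite ground set E (a collection of subsets of E closed under taking subsets and containing the empty set). Then Γ is a matroid independence complex — i.e., Γ satisfies the augmentation axiom: for all γ, β ∈ Γ with |γ| > |β| there exists x ∈ γ ∖ β such that β ∪ {x} ∈ Γ — if and only if Γ is link-invariant: for every X ⊆ E and every two facets σ, τ of the restriction Γ|X, one has link_Γ(σ) = link_Γ(τ). -/
import Mathlib


variable {α : Type*} [DecidableEq α]

/-- `Γ` is a simplicial complex on the finite ground set `E`: it contains the empty set,
all its faces are subsets of `E`, and it is closed under taking subsets. -/
def IsComplexOn (E : Finset α) (Γ : Set (Finset α)) : Prop :=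
  (∅ : Finset α) ∈ Γ ∧ (∀ γ ∈ Γ, γ ⊆ E) ∧ ∀ γ ∈ Γ, ∀ β ⊆ γ, β ∈ Γ

/-- `φ` is a facet (maximal face) of `Γ`. -/
def IsFacetOf (Γ : Set (Finset α)) (φ : Finset α) : Prop :=
  φ ∈ Γ ∧ ∀ ψ ∈ Γ, φ ⊆ ψ → ψ = φ

/-- The restriction `Γ|S` of a simplicial complex. -/
def restrictC (Γ : Set (Finset α)) (S : Finset α) : Set (Finset α) :=
  {γ ∈ Γ | γ ⊆ S}

/-- The link of a face `σ` in `Γ`. -/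
def linkC (Γ : Set (Finset α)) (σ : Finset α) : Set (Finset α) :=
  {β | Disjoint β σ ∧ β ∪ σ ∈ Γ}

lemma mem_restrictC {Γ : Set (Finset α)} {S γ : Finset α} :
    γ ∈ restrictC Γ S ↔ γ ∈ Γ ∧ γ ⊆ S := Iff.rfl

lemma mem_linkC {Γ : Set (Finset α)} {σ β : Finset α} :
    β ∈ linkC Γ σ ↔ Disjoint β σ ∧ β ∪ σ ∈ Γ := Iff.rfl

lemma facet_mono {Γ : Set (Finset α)} {X Y σ : Finset α} (hYX : Y ⊆ X)
    (hσY : σ ⊆ Y) (hσ : IsFacetOf (restrictC Γ X) σ) : IsFacetOf (restrictC Γ Y) σ := by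
  refine ⟨⟨hσ.1.1, hσY⟩, ?_⟩
  intro ψ hψ hsub
  exact hσ.2 ψ ⟨hψ.1, hψ.2.trans hYX⟩ hsub

lemma exists_facet_above_aux {Γ : Set (Finset α)} (X : Finset α) :
    ∀ n (A : Finset α), A ∈ Γ → A ⊆ X → X.card - A.card ≤ n →
      ∃ φ, A ⊆ φ ∧ IsFacetOf (restrictC Γ X) φ := by
  intro n
  induction n with
  | zero =>
    intro A hA hAX hc
    have hXA : X.card ≤ A.card := by omega
    have hAX' : A = X := Finset.eq_of_subset_of_card_le hAX hXA
    refine ⟨A, subset_rfl, ⟨⟨hA, hAX⟩, ?_⟩⟩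
    intro ψ hψ hsub
    exact Finset.Subset.antisymm (hAX' ▸ hψ.2) hsub
  | succ n IH =>
    intro A hA hAX hc
    by_cases h : ∀ ψ ∈ Γ, ψ ⊆ X → A ⊆ ψ → ψ = A
    · exact ⟨A, subset_rfl, ⟨⟨hA, hAX⟩, fun ψ hψ hs => h ψ hψ.1 hψ.2 hs⟩⟩
    · push_neg at h
      obtain ⟨ψ, hψΓ, hψX, hAψ, hne⟩ := h
      have hss : A ⊂ ψ := hAψ.ssubset_of_ne (Ne.symm hne)
      have hlt : A.card < ψ.card := Finset.card_lt_card hss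
      obtain ⟨φ, h1, h2⟩ := IH ψ hψΓ hψX (by
        have := Finset.card_le_card hψX; omega)
      exact ⟨φ, hAψ.trans h1, h2⟩

lemma exists_facet_above {Γ : Set (Finset α)} {X A : Finset α} (hA : A ∈ Γ) (hAX : A ⊆ X) :
    ∃ φ, A ⊆ φ ∧ IsFacetOf (restrictC Γ X) φ :=
  exists_facet_above_aux X X.card A hA hAX (Nat.sub_le _ _)

lemma aug_chain {Γ : Set (Finset α)}
    (haug : ∀ γ ∈ Γ, ∀ β ∈ Γ, β.card < γ.card → ∃ x ∈ γ \ β, insert x β ∈ Γ) :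
    ∀ n (A B : Finset α), A ∈ Γ → B ∈ Γ → B.card - A.card ≤ n →
      ∃ C ∈ Γ, A ⊆ C ∧ C ⊆ A ∪ B ∧ B.card ≤ C.card := by
  intro n
  induction n with
  | zero =>
    intro A B hA _ hc
    exact ⟨A, hA, subset_rfl, Finset.subset_union_left, by omega⟩
  | succ n IH =>
    intro A B hA hB hc
    rcases le_or_gt B.card A.card with h | h
    · exact ⟨A, hA, subset_rfl, Finset.subset_union_left, h⟩
    · obtain ⟨x, hx, hins⟩ := haug B hB A hA h
      rw [Finset.mem_sdiff] at hx
      have hcard : (insert x A).card = A.card + 1 := Finset.card_insert_of_notMem hx.2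
      obtain ⟨C, hC, h1, h2, h3⟩ := IH (insert x A) B hins hB (by omega)
      refine ⟨C, hC, (Finset.subset_insert x A).trans h1, ?_, h3⟩
      refine h2.trans ?_
      intro y hy
      rcases Finset.mem_union.mp hy with h | h
      · rcases Finset.mem_insert.mp h with rfl | h
        · exact Finset.mem_union_right _ hx.1
        · exact Finset.mem_union_left _ h
      · exact Finset.mem_union_right _ h

lemma facet_card_eq_of_aug {Γ : Set (Finset α)}
    (haug : ∀ γ ∈ Γ, ∀ β ∈ Γ, β.card < γ.card → ∃ x ∈ γ \ β, insert x β ∈ Γ)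
    {X σ τ : Finset α} (hσ : IsFacetOf (restrictC Γ X) σ)
    (hτ : IsFacetOf (restrictC Γ X) τ) : σ.card = τ.card := by
  have key : ∀ a b : Finset α, IsFacetOf (restrictC Γ X) a → IsFacetOf (restrictC Γ X) b →
      ¬ a.card < b.card := by
    intro a b ha hb hlt
    obtain ⟨x, hx, hins⟩ := haug b hb.1.1 a ha.1.1 hlt
    rw [Finset.mem_sdiff] at hx
    have hsub : insert x a ⊆ X := Finset.insert_subset (hb.1.2 hx.1) ha.1.2
    have heq := ha.2 _ ⟨hins, hsub⟩ (Finset.subset_insert _ _)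
    exact hx.2 (heq ▸ Finset.mem_insert_self x a)
  exact le_antisymm (not_lt.mp (key τ σ hτ hσ)) (not_lt.mp (key σ τ hσ hτ))

lemma link_subset_of_facets {E : Finset α} {Γ : Set (Finset α)} (hΓ : IsComplexOn E Γ)
    (haug : ∀ γ ∈ Γ, ∀ β ∈ Γ, β.card < γ.card → ∃ x ∈ γ \ β, insert x β ∈ Γ)
    {X σ τ : Finset α}
    (hσ : IsFacetOf (restrictC Γ X) σ) (hτ : IsFacetOf (restrictC Γ X) τ) :
    linkC Γ σ ⊆ linkC Γ τ := by
  obtain ⟨hempty, hsubE, hdown⟩ := hΓ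
  intro β hβ
  obtain ⟨hd, hu⟩ := hβ
  have hβX : Disjoint β X := by
    rw [Finset.disjoint_left]
    intro x hxβ hxX
    have h1 : insert x σ ∈ Γ := hdown _ hu _
      (Finset.insert_subset (Finset.mem_union_left _ hxβ) Finset.subset_union_right)
    have h2 : insert x σ ⊆ X := Finset.insert_subset hxX hσ.1.2
    have h3 := hσ.2 _ ⟨h1, h2⟩ (Finset.subset_insert _ _)
    exact (Finset.disjoint_left.mp hd hxβ) (h3 ▸ Finset.mem_insert_self x σ)
  have hdτ : Disjoint β τ := hβX.mono_right hτ.1.2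
  have hcard : σ.card = τ.card := facet_card_eq_of_aug haug hσ hτ
  obtain ⟨C, hC, h1, h2, h3⟩ := aug_chain haug ((β ∪ σ).card) τ (β ∪ σ) hτ.1.1 hu (Nat.sub_le _ _)
  have hCX : C ∩ X = τ := hτ.2 _ ⟨hdown _ hC _ Finset.inter_subset_left, Finset.inter_subset_right⟩
    (Finset.subset_inter h1 hτ.1.2)
  have hCsub : C ⊆ β ∪ τ := by
    intro y hy
    by_cases hyX : y ∈ X
    · exact Finset.mem_union_right _ (hCX ▸ Finset.mem_inter.mpr ⟨hy, hyX⟩)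
    · rcases Finset.mem_union.mp (h2 hy) with h | h
      · exact absurd (hτ.1.2 h) hyX
      · rcases Finset.mem_union.mp h with h' | h'
        · exact Finset.mem_union_left _ h'
        · exact absurd (hσ.1.2 h') hyX
  have hcard2 : (β ∪ τ).card ≤ C.card := by
    have e1 : (β ∪ σ).card = β.card + σ.card :=
      Finset.card_union_of_disjoint (hβX.mono_right hσ.1.2)
    have e2 : (β ∪ τ).card = β.card + τ.card := Finset.card_union_of_disjoint hdτ
    omega
  have hCeq : C = β ∪ τ := Finset.eq_of_subset_of_card_le hCsub hcard2
  exact ⟨hdτ, hCeq ▸ hC⟩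

lemma pure_of_link_invariant {E : Finset α} {Γ : Set (Finset α)} (hΓ : IsComplexOn E Γ)
    (hlink : ∀ X ⊆ E, ∀ σ τ : Finset α, IsFacetOf (restrictC Γ X) σ →
      IsFacetOf (restrictC Γ X) τ → linkC Γ σ = linkC Γ τ) :
    ∀ n, ∀ X ⊆ E, X.card ≤ n → ∀ σ τ : Finset α, IsFacetOf (restrictC Γ X) σ →
      IsFacetOf (restrictC Γ X) τ → σ.card = τ.card := by
  obtain ⟨hempty, hsubE, hdown⟩ := hΓ
  intro n
  induction n with
  | zero =>
    intro X hXE hc σ τ hσ hτ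
    have hX : X = ∅ := Finset.card_eq_zero.mp (Nat.le_zero.mp hc)
    subst hX
    rw [Finset.subset_empty.mp hσ.1.2, Finset.subset_empty.mp hτ.1.2]
  | succ n IH =>
    intro X hXE hc σ τ hσ hτ
    have key : ∀ a b : Finset α, IsFacetOf (restrictC Γ X) a → IsFacetOf (restrictC Γ X) b →
        ∀ s ∈ a, s ∉ b → a.card ≤ b.card := by
      intro a b ha hb s hsa hsb
      have hYX : X.erase s ⊆ X := Finset.erase_subset _ _
      have hYE : X.erase s ⊆ E := hYX.trans hXE
      have hsX : s ∈ X := ha.1.2 hsa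
      have hYcard : (X.erase s).card ≤ n := by
        rw [Finset.card_erase_of_mem hsX]
        have : 1 ≤ X.card := Finset.card_pos.mpr ⟨s, hsX⟩
        omega
      have hbY : b ⊆ X.erase s := Finset.subset_erase.mpr ⟨hb.1.2, hsb⟩
      have hbF : IsFacetOf (restrictC Γ (X.erase s)) b := facet_mono hYX hbY hb
      have haerase : a.erase s ∈ Γ := hdown _ ha.1.1 _ (Finset.erase_subset _ _)
      have haeY : a.erase s ⊆ X.erase s := Finset.erase_subset_erase _ ha.1.2
      obtain ⟨a', ha'sub, ha'F⟩ := exists_facet_above (Γ := Γ) haerase haeY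
      have hcard' : a'.card = b.card := IH (X.erase s) hYE hYcard a' b ha'F hbF
      have hlinks := hlink (X.erase s) hYE a' b ha'F hbF
      have hsnb : ({s} : Finset α) ∉ linkC Γ b := by
        rintro ⟨hd', hu'⟩
        have hsubX : {s} ∪ b ⊆ X :=
          Finset.union_subset (Finset.singleton_subset_iff.mpr hsX) hb.1.2
        have heq := hb.2 _ ⟨hu', hsubX⟩ Finset.subset_union_right
        exact hsb (heq ▸ Finset.mem_union_left _ (Finset.mem_singleton_self s))
      have hsna' : ({s} : Finset α) ∉ linkC Γ a' := hlinks ▸ hsnb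
      have hsa' : s ∉ a' := fun h => (Finset.notMem_erase s X) (ha'F.1.2 h)
      have hnu : {s} ∪ a' ∉ Γ := fun h =>
        hsna' ⟨Finset.disjoint_singleton_left.mpr hsa', h⟩
      have hne : a.erase s ≠ a' := by
        rintro rfl
        apply hnu
        rw [← Finset.insert_eq, Finset.insert_erase hsa]
        exact ha.1.1
      have hss : a.erase s ⊂ a' := ha'sub.ssubset_of_ne hne
      have hlt := Finset.card_lt_card hss
      have hce := Finset.card_erase_of_mem hsa
      have hapos : 1 ≤ a.card := Finset.card_pos.mpr ⟨s, hsa⟩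
      omega
    by_cases h1 : σ ⊆ τ
    · rw [hσ.2 τ hτ.1 h1]
    · by_cases h2 : τ ⊆ σ
      · rw [hτ.2 σ hσ.1 h2]
      · obtain ⟨s, hs1, hs2⟩ := Finset.not_subset.mp h1
        obtain ⟨t, ht1, ht2⟩ := Finset.not_subset.mp h2
        exact le_antisymm (key σ τ hσ hτ s hs1 hs2) (key τ σ hτ hσ t ht1 ht2)

/-- A simplicial complex `Γ` on a finite ground set `E` is a matroid independence complex
(i.e., satisfies the augmentation axiom) if and only if it is link-invariant: for every
`X ⊆ E`, any two facets of `Γ|X` have the same link in `Γ`. -/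
theorem matroid_iff_link_invariant (E : Finset α) (Γ : Set (Finset α))
    (hΓ : IsComplexOn E Γ) :
    (∀ γ ∈ Γ, ∀ β ∈ Γ, β.card < γ.card → ∃ x ∈ γ \ β, insert x β ∈ Γ) ↔
    (∀ X ⊆ E, ∀ σ τ : Finset α, IsFacetOf (restrictC Γ X) σ →
      IsFacetOf (restrictC Γ X) τ → linkC Γ σ = linkC Γ τ) := by
  constructor
  · intro haug X _hXE σ τ hσ hτ
    exact Set.Subset.antisymm (link_subset_of_facets hΓ haug hσ hτ)
      (link_subset_of_facets hΓ haug hτ hσ)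
  · intro hlink γ hγ β hβ hlt
    have pure := pure_of_link_invariant hΓ hlink
    obtain ⟨hempty, hsubE, hdown⟩ := hΓ
    have hXE : β ∪ γ ⊆ E := Finset.union_subset (hsubE β hβ) (hsubE γ hγ)
    obtain ⟨φ, hβφ, hφF⟩ := exists_facet_above (Γ := Γ) (X := β ∪ γ) hβ
      Finset.subset_union_left
    obtain ⟨ψ, hγψ, hψF⟩ := exists_facet_above (Γ := Γ) (X := β ∪ γ) hγ
      Finset.subset_union_right
    have hcard : φ.card = ψ.card := pure (β ∪ γ).card (β ∪ γ) hXE le_rfl φ ψ hφF hψF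
    have hγle : γ.card ≤ ψ.card := Finset.card_le_card hγψ
    have hβφlt : β.card < φ.card := by omega
    have hβφss : β ⊂ φ := hβφ.ssubset_of_ne (by rintro rfl; omega)
    obtain ⟨x, hxφ, hxβ⟩ := Finset.exists_of_ssubset hβφss
    have hxX : x ∈ β ∪ γ := hφF.1.2 hxφ
    have hxγ : x ∈ γ := by
      rcases Finset.mem_union.mp hxX with h | h
      · exact absurd h hxβ
      · exact h
    exact ⟨x, Finset.mem_sdiff.mpr ⟨hxγ, hxβ⟩,
      hdown _ hφF.1.1 _ (Finset.insert_subset hxφ hβφ)⟩
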